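/- Let g be a positive integer, let τ be a symmetric g×g complex matrix whose imaginary part is positive definite, and let z ∈ ℂ^g. Then the family (exp(πi nᵀτn + 2πi nᵀz))_{n ∈ ℤ^g} is summable (the series defining the Riemann theta function converges absolutely). -/

import Mathlib

open Complex Real

lemma summable_pi_prod {f : ℤ → ℝ} (hf : Summable f) (h0 : ∀ k, 0 ≤ f k) (g : ℕ) :
    Summable fun n : Fin g → ℤ => ∏ i, f (n i) := by
  induction g with
  | zero =>
    simp only [Finset.univ_eq_empty, Finset.prod_empty]
    exact summable_of_finite_support (Set.toFinite _)
  | succ g IH =>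
    have hf' : (0 : ℤ → ℝ) ≤ f := fun k => h0 k
    have hIH' : (0 : (Fin g → ℤ) → ℝ) ≤ fun n => ∏ i, f (n i) :=
      fun n => Finset.prod_nonneg fun i _ => h0 _
    have hprod := Summable.mul_of_nonneg hf IH hf' hIH'
    have h2 := hprod.comp_injective (Fin.consEquiv (fun _ : Fin (g + 1) => ℤ)).symm.injective
    refine h2.congr fun n => ?_
    simp only [Function.comp, Fin.prod_univ_succ]
    rfl

lemma quad_scaling {g : ℕ} (M : Matrix (Fin g) (Fin g) ℝ) (t : ℝ) (x : Fin g → ℝ) :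
    (∑ i, ∑ j, (t • x) i * M i j * (t • x) j) = t ^ 2 * ∑ i, ∑ j, x i * M i j * x j := by
  simp only [Pi.smul_apply, smul_eq_mul, Finset.mul_sum]
  exact Finset.sum_congr rfl fun i _ => Finset.sum_congr rfl fun j _ => by ring

lemma quad_eq_dot {g : ℕ} (M : Matrix (Fin g) (Fin g) ℝ) (x : Fin g → ℝ) :
    (∑ i, ∑ j, x i * M i j * x j) = dotProduct (star x) (M.mulVec x) := by
  simp only [dotProduct, Matrix.mulVec, Pi.star_apply, star_trivial, Finset.mul_sum]
  exact Finset.sum_congr rfl fun i _ => Finset.sum_congr rfl fun j _ => by ring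

lemma posdef_lower_bound {g : ℕ} (hg : 0 < g) (M : Matrix (Fin g) (Fin g) ℝ)
    (hM : M.PosDef) :
    ∃ c > (0:ℝ), ∀ x : Fin g → ℝ, c * ∑ i, x i ^ 2 ≤ ∑ i, ∑ j, x i * M i j * x j := by
  set q : (Fin g → ℝ) → ℝ := fun x => ∑ i, ∑ j, x i * M i j * x j with hq
  have hqpos : ∀ x : Fin g → ℝ, x ≠ 0 → 0 < q x := fun x hx => by
    have h := hM.dotProduct_mulVec_pos hx
    have he : q x = dotProduct (star x) (M.mulVec x) := quad_eq_dot M x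
    rw [he]; exact h
  have hqcont : Continuous q := by
    apply continuous_finset_sum; intro i _
    apply continuous_finset_sum; intro j _
    exact ((continuous_apply i).mul continuous_const).mul (continuous_apply j)
  have hcpt : IsCompact (Metric.sphere (0 : Fin g → ℝ) 1) := isCompact_sphere 0 1
  have hne : (Metric.sphere (0 : Fin g → ℝ) 1).Nonempty := by
    refine ⟨Pi.single ⟨0, hg⟩ 1, ?_⟩
    simp [mem_sphere_iff_norm, Pi.norm_single]
  obtain ⟨x₀, hx₀S, hx₀min⟩ := hcpt.exists_isMinOn hne hqcont.continuousOn
  have hx₀ne : x₀ ≠ 0 := by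
    intro h; rw [mem_sphere_iff_norm, h, sub_zero, norm_zero] at hx₀S; norm_num at hx₀S
  set c := q x₀ with hc
  have hcpos : 0 < c := hqpos x₀ hx₀ne
  have hgR : (0:ℝ) < g := by exact_mod_cast hg
  refine ⟨c / g, div_pos hcpos hgR, fun x => ?_⟩
  rcases eq_or_ne x 0 with rfl | hx
  · simp [hq]
  · have hnx : (0:ℝ) < ‖x‖ := norm_pos_iff.mpr hx
    have hxs : ‖x‖⁻¹ • x ∈ Metric.sphere (0 : Fin g → ℝ) 1 := by
      simp [mem_sphere_iff_norm, norm_smul, abs_of_pos (inv_pos.mpr hnx),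
        inv_mul_cancel₀ hnx.ne']
    have h1 : c ≤ q (‖x‖⁻¹ • x) := hx₀min hxs
    have h2 : q (‖x‖⁻¹ • x) = (‖x‖⁻¹) ^ 2 * q x := quad_scaling M _ x
    rw [h2] at h1
    have hp : (0:ℝ) < ‖x‖ ^ 2 := pow_pos hnx 2
    have h3 : c * ‖x‖ ^ 2 ≤ q x := by
      have h4 := mul_le_mul_of_nonneg_right h1 hp.le
      rwa [mul_comm _ (q x), mul_assoc, inv_pow, inv_mul_cancel₀ hp.ne', mul_one] at h4
    have hsum : (∑ i, x i ^ 2) ≤ g * ‖x‖ ^ 2 := by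
      have hbound : ∀ i, x i ^ 2 ≤ ‖x‖ ^ 2 := fun i => by
        have h := norm_le_pi_norm x i
        calc x i ^ 2 = ‖x i‖ ^ 2 := by rw [Real.norm_eq_abs]; exact (_root_.sq_abs _).symm
          _ ≤ ‖x‖ ^ 2 := pow_le_pow_left₀ (norm_nonneg _) h 2
      calc (∑ i, x i ^ 2) ≤ ∑ _i : Fin g, ‖x‖ ^ 2 := Finset.sum_le_sum fun i _ => hbound i
        _ = g * ‖x‖ ^ 2 := by
            rw [Finset.sum_const, Finset.card_univ, Fintype.card_fin, nsmul_eq_mul]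
    calc c / g * ∑ i, x i ^ 2 ≤ c / g * (g * ‖x‖ ^ 2) :=
          mul_le_mul_of_nonneg_left hsum (div_nonneg hcpos.le hgR.le)
      _ = c * ‖x‖ ^ 2 := by field_simp
      _ ≤ q x := h3

/-- For `τ` in the Siegel upper half-space (symmetric with positive
definite imaginary part) and any `z ∈ ℂ^g`, the series defining the Riemann theta
function converges absolutely, i.e. the family of its terms is summable. -/
theorem riemann_theta_summable (g : ℕ) (hg : 0 < g)
    (τ : Matrix (Fin g) (Fin g) ℂ) (hsym : τ.IsSymm)
    (hpos : (Matrix.of fun i j => (τ i j).im).PosDef)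
    (z : Fin g → ℂ) :
    Summable fun n : Fin g → ℤ =>
      Complex.exp ((Real.pi : ℂ) * Complex.I *
          (∑ i, ∑ j, (n i : ℂ) * τ i j * (n j : ℂ))
        + 2 * (Real.pi : ℂ) * Complex.I * ∑ i, (n i : ℂ) * z i) := by
  obtain ⟨c, hc, hcq⟩ := posdef_lower_bound hg _ hpos
  set B : ℝ := ∑ j, |(z j).im| with hB
  have hBi : ∀ i, |(z i).im| ≤ B :=
    fun i => Finset.single_le_sum (f := fun j => |(z j).im|)
      (fun j _ => abs_nonneg _) (Finset.mem_univ i)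
  set f : ℤ → ℝ := fun k => Real.exp (-π * (c * (k:ℝ) ^ 2 - 2 * B * |(k:ℝ)|)) with hf
  have hfs : Summable f := by
    have h := summable_pow_mul_jacobiTheta₂_term_bound B hc 0
    simpa only [pow_zero, one_mul, Int.cast_abs] using h
  have hf0 : ∀ k, 0 ≤ f k := fun k => Real.exp_nonneg _
  refine Summable.of_norm_bounded (g := fun n : Fin g → ℤ => ∏ i, f (n i))
    (summable_pi_prod hfs hf0 g) fun n => ?_
  rw [Complex.norm_exp]
  have hre : ((Real.pi : ℂ) * Complex.I *
        (∑ i, ∑ j, (n i : ℂ) * τ i j * (n j : ℂ))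
      + 2 * (Real.pi : ℂ) * Complex.I * ∑ i, (n i : ℂ) * z i).re
      = -π * (∑ i, ∑ j, (n i : ℝ) * (τ i j).im * (n j : ℝ))
        - 2 * π * ∑ i, (n i : ℝ) * (z i).im := by
    simp only [Complex.add_re, Complex.mul_re, Complex.mul_im, Complex.I_re, Complex.I_im,
      Complex.ofReal_re, Complex.ofReal_im, Complex.re_sum, Complex.im_sum,
      Complex.intCast_re, Complex.intCast_im, Complex.re_ofNat, Complex.im_ofNat,
      mul_zero, zero_mul, sub_zero, zero_add, add_zero, zero_sub, mul_one]
    ring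
  rw [hre]
  have hprod : (∏ i, f (n i))
      = Real.exp (∑ i, -π * (c * ((n i : ℝ)) ^ 2 - 2 * B * |(n i : ℝ)|)) := by
    rw [Real.exp_sum]
  rw [hprod, Real.exp_le_exp]
  -- exponent inequality
  have hQ : c * ∑ i, ((n i : ℝ)) ^ 2
      ≤ ∑ i, ∑ j, (n i : ℝ) * (τ i j).im * (n j : ℝ) := by
    have := hcq (fun i => (n i : ℝ))
    simpa using this
  have hL : ∀ i, -(B * |(n i : ℝ)|) ≤ (n i : ℝ) * (z i).im := fun i => by
    have h1 : |(n i : ℝ) * (z i).im| ≤ |(n i : ℝ)| * B := by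
      rw [abs_mul]
      exact mul_le_mul_of_nonneg_left (hBi i) (abs_nonneg _)
    have h2 := neg_abs_le ((n i : ℝ) * (z i).im)
    nlinarith
  have hLsum : -(B * ∑ i, |(n i : ℝ)|) ≤ ∑ i, (n i : ℝ) * (z i).im := by
    rw [Finset.mul_sum, ← Finset.sum_neg_distrib]
    exact Finset.sum_le_sum fun i _ => hL i
  have hRHS : (∑ i, -π * (c * ((n i : ℝ)) ^ 2 - 2 * B * |(n i : ℝ)|))
      = -(π * (c * ∑ i, ((n i : ℝ)) ^ 2)) + 2 * (π * (B * ∑ i, |(n i : ℝ)|)) := by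
    rw [Finset.sum_congr rfl (fun i (_ : i ∈ Finset.univ) =>
      (by ring : -π * (c * ((n i : ℝ)) ^ 2 - 2 * B * |(n i : ℝ)|)
        = -(π * (c * ((n i : ℝ)) ^ 2)) + 2 * (π * (B * |(n i : ℝ)|)))),
      Finset.sum_add_distrib]
    rw [Finset.sum_neg_distrib]
    simp only [← Finset.mul_sum]
  rw [hRHS]
  have e1 : π * (c * ∑ i, ((n i : ℝ)) ^ 2)
      ≤ π * ∑ i, ∑ j, (n i : ℝ) * (τ i j).im * (n j : ℝ) :=
    mul_le_mul_of_nonneg_left hQ Real.pi_pos.le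
  have e2 : π * (-(B * ∑ i, |(n i : ℝ)|)) ≤ π * ∑ i, (n i : ℝ) * (z i).im :=
    mul_le_mul_of_nonneg_left hLsum Real.pi_pos.le
  linarith
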